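/- Let K be a compact Hausdorff space containing a nontrivial convergent sequence, i.e., a sequence (x_n) of pairwise distinct points converging to a point x with x_n ≠ x for all n. Then the Banach space C(K) of continuous real-valued functions on K with the supremum norm contains a closed linear subspace E isometrically isomorphic to c₀, together with a bounded linear projection P : C(K) → E; explicitly, if (f_n) ⊆ C(K,[0,1]) have pairwise disjoint supports with f_n(x_n) = 1, then P(g) = Σ_n (g(x_n) − g(x)) f_n defines a bounded projection onto the closed span of {f_n}. -/

import Mathlib

open Filter Topology ZeroAtInfty Set

section aux

variable {K : Type*} [TopologicalSpace K] [CompactSpace K] [T2Space K]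

lemma my_disj_eval {f : ℕ → C(K, ℝ)}
    (hd : Pairwise fun n m => Disjoint (tsupport ⇑(f n)) (tsupport ⇑(f m)))
    {n m : ℕ} (hnm : n ≠ m) {y : K} (hy : f n y ≠ 0) : f m y = 0 := by
  have h1 : y ∈ tsupport ⇑(f n) := subset_tsupport _ hy
  exact image_eq_zero_of_notMem_tsupport (Set.disjoint_left.mp (hd hnm) h1)

lemma my_sum_norm_le {f : ℕ → C(K, ℝ)} (hbd : ∀ n y, ‖f n y‖ ≤ 1)
    (hd : Pairwise fun n m => Disjoint (tsupport ⇑(f n)) (tsupport ⇑(f m)))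
    (a : ℕ → ℝ) (t : Finset ℕ) {C : ℝ} (hC : 0 ≤ C)
    (ha : ∀ n ∈ t, ‖a n‖ ≤ C) : ‖∑ n ∈ t, a n • f n‖ ≤ C := by
  rw [ContinuousMap.norm_le _ hC]
  intro y
  have hev : (∑ n ∈ t, a n • f n) y = ∑ n ∈ t, a n * f n y := by
    simp
  rw [hev]
  by_cases h : ∃ n ∈ t, f n y ≠ 0
  · obtain ⟨n₀, hn₀t, hn₀⟩ := h
    rw [Finset.sum_eq_single_of_mem n₀ hn₀t
      (fun m hm hmn => by rw [my_disj_eval hd (Ne.symm hmn) hn₀, mul_zero])]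
    calc ‖a n₀ * f n₀ y‖ = ‖a n₀‖ * ‖f n₀ y‖ := norm_mul _ _
    _ ≤ C * 1 := mul_le_mul (ha n₀ hn₀t) (hbd n₀ y) (norm_nonneg _) hC
    _ = C := mul_one C
  · push_neg at h
    have : ∑ n ∈ t, a n * f n y = 0 := Finset.sum_eq_zero fun n hn => by
      rw [h n hn, mul_zero]
    simpa [this]

lemma my_summable {f : ℕ → C(K, ℝ)} (hbd : ∀ n y, ‖f n y‖ ≤ 1)
    (hd : Pairwise fun n m => Disjoint (tsupport ⇑(f n)) (tsupport ⇑(f m)))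
    {a : ℕ → ℝ} (ha : Tendsto a atTop (𝓝 0)) :
    Summable fun n => a n • f n := by
  rw [summable_iff_vanishing_norm]
  intro ε hε
  obtain ⟨N, hN⟩ := (Metric.tendsto_atTop.mp ha) (ε / 2) (by positivity)
  refine ⟨Finset.range N, fun t ht => ?_⟩
  have hb : ‖∑ n ∈ t, a n • f n‖ ≤ ε / 2 := by
    refine my_sum_norm_le hbd hd a t (by positivity) fun n hn => ?_
    have hnN : n ∉ Finset.range N := Finset.disjoint_left.mp ht hn
    have : N ≤ n := by simpa using hnN
    have := hN n this
    rw [Real.dist_eq, sub_zero] at this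
    exact this.le
  linarith

lemma my_tsum_apply {f : ℕ → C(K, ℝ)} {a : ℕ → ℝ}
    (hs : Summable fun n => a n • f n) (y : K) :
    (∑' n, a n • f n) y = ∑' n, a n * f n y := by
  have := (ContinuousMap.evalCLM ℝ y).map_tsum hs
  simpa [ContinuousMap.evalCLM] using this

end aux

section part2

variable {K : Type*} [TopologicalSpace K] [CompactSpace K] [T2Space K]

set_option linter.unusedSectionVars false

lemma my_part2 (x : ℕ → K) (x₀ : K) (hlim : Tendsto x atTop (𝓝 x₀))
    (f : ℕ → C(K, ℝ))
    (hicc : ∀ n, ∀ y : K, f n y ∈ Set.Icc (0 : ℝ) 1)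
    (hd : Pairwise fun n m => Disjoint (tsupport ⇑(f n)) (tsupport ⇑(f m)))
    (hone : ∀ n, f n (x n) = 1) :
    ∃ P : C(K, ℝ) →L[ℝ] C(K, ℝ),
      (∀ g : C(K, ℝ), P g = ∑' n, (g (x n) - g x₀) • f n) ∧
      LinearMap.range (P : C(K, ℝ) →ₗ[ℝ] C(K, ℝ)) = (Submodule.span ℝ (Set.range f)).topologicalClosure ∧
      ∀ g ∈ (Submodule.span ℝ (Set.range f)).topologicalClosure, P g = g := by
  have hbd : ∀ n y, ‖f n y‖ ≤ 1 := fun n y => by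
    rw [Real.norm_eq_abs, abs_le]
    exact ⟨by linarith [(hicc n y).1], (hicc n y).2⟩
  have hcoef : ∀ g : C(K, ℝ), Tendsto (fun n => g (x n) - g x₀) atTop (𝓝 0) := by
    intro g
    have : Tendsto (fun n => g (x n) - g x₀) atTop (𝓝 (g x₀ - g x₀)) :=
      (((g.continuous.tendsto x₀).comp hlim)).sub tendsto_const_nhds
    simpa using this
  have hsum : ∀ g : C(K, ℝ), Summable fun n => (g (x n) - g x₀) • f n :=
    fun g => my_summable hbd hd (hcoef g)
  set P₀ : C(K, ℝ) →ₗ[ℝ] C(K, ℝ) :=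
    { toFun := fun g => ∑' n, (g (x n) - g x₀) • f n
      map_add' := by
        intro g h
        rw [← Summable.tsum_add (hsum g) (hsum h)]
        show (∑' n, ((g + h) (x n) - (g + h) x₀) • f n) = _
        refine tsum_congr fun n => ?_
        rw [← add_smul]
        congr 1
        simp only [ContinuousMap.add_apply]
        ring
      map_smul' := by
        intro c g
        simp only [RingHom.id_apply]
        rw [← tsum_const_smul'' c]
        show (∑' n, ((c • g) (x n) - (c • g) x₀) • f n) = _
        refine tsum_congr fun n => ?_
        rw [smul_smul]
        congr 1
        simp only [ContinuousMap.smul_apply, smul_eq_mul]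
        ring } with hP₀def
  have hnormle : ∀ g : C(K, ℝ), ‖P₀ g‖ ≤ 2 * ‖g‖ := by
    intro g
    have h2 : (0:ℝ) ≤ 2 * ‖g‖ := by positivity
    have hb : ∀ s : Finset ℕ, ‖∑ n ∈ s, (g (x n) - g x₀) • f n‖ ≤ 2 * ‖g‖ := by
      intro s
      refine my_sum_norm_le hbd hd _ s h2 fun n _ => ?_
      have h1 := g.norm_coe_le_norm (x n)
      have h3 := g.norm_coe_le_norm x₀
      calc ‖g (x n) - g x₀‖ ≤ ‖g (x n)‖ + ‖g x₀‖ := norm_sub_le _ _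
      _ ≤ ‖g‖ + ‖g‖ := add_le_add h1 h3
      _ = 2 * ‖g‖ := by ring
    exact le_of_tendsto' ((hsum g).hasSum : Tendsto _ _ _).norm hb
  set P : C(K, ℝ) →L[ℝ] C(K, ℝ) := P₀.mkContinuous 2 hnormle with hPdef
  have hP : ∀ g : C(K, ℝ), P g = ∑' n, (g (x n) - g x₀) • f n := fun g => rfl
  -- f m x₀ = 0
  have hfx : ∀ n m, n ≠ m → f m (x n) = 0 := fun n m hnm =>
    my_disj_eval hd hnm (by rw [hone n]; norm_num)
  have hfx0 : ∀ m, f m x₀ = 0 := by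
    intro m
    have h1 : Tendsto (fun n => f m (x n)) atTop (𝓝 (f m x₀)) :=
      ((f m).continuous.tendsto x₀).comp hlim
    have h2 : (fun n => f m (x n)) =ᶠ[atTop] fun _ => (0:ℝ) :=
      eventually_atTop.2 ⟨m + 1, fun n hn => hfx n m (by omega)⟩
    exact tendsto_nhds_unique (h1.congr' h2) tendsto_const_nhds
  have hPf : ∀ m, P (f m) = f m := by
    intro m
    rw [hP]
    rw [tsum_eq_single m]
    · rw [hone m, hfx0 m]
      norm_num
    · intro n hn
      rw [hfx n m hn, hfx0 m]
      norm_num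
  -- range ⊆ closure of span
  have hmemcl : ∀ g : C(K, ℝ), P g ∈ (Submodule.span ℝ (Set.range f)).topologicalClosure := by
    intro g
    rw [hP]
    have h1 : Tendsto (fun s : Finset ℕ => ∑ n ∈ s, (g (x n) - g x₀) • f n) atTop
        (𝓝 (∑' n, (g (x n) - g x₀) • f n)) := (hsum g).hasSum
    refine mem_closure_of_tendsto h1 (Eventually.of_forall fun s => ?_)
    exact Submodule.sum_mem _ fun n _ =>
      Submodule.smul_mem _ _ (Submodule.subset_span ⟨n, rfl⟩)
  -- P fixes the closure
  have hfix : ∀ g ∈ (Submodule.span ℝ (Set.range f)).topologicalClosure, P g = g := by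
    intro g hg
    have hcl : IsClosed {h : C(K, ℝ) | P h = h} := isClosed_eq P.continuous continuous_id
    have hspan : (Submodule.span ℝ (Set.range f) : Set C(K, ℝ)) ⊆ {h | P h = h} := by
      intro h hh
      induction hh using Submodule.span_induction with
      | mem h hm => obtain ⟨m, rfl⟩ := hm; exact hPf m
      | zero => simp
      | add a b _ _ ha hb => simp only [Set.mem_setOf_eq] at *; rw [map_add, ha, hb]
      | smul c a _ ha => simp only [Set.mem_setOf_eq] at *; rw [map_smul, ha]
    have := closure_minimal hspan hcl
    have hg' : g ∈ closure (Submodule.span ℝ (Set.range f) : Set C(K, ℝ)) := hg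
    exact this hg'
  refine ⟨P, hP, ?_, hfix⟩
  apply le_antisymm
  · rintro g ⟨h, rfl⟩
    exact hmemcl h
  · intro g hg
    exact ⟨g, hfix g hg⟩

end part2

section bumps

variable {K : Type*} [TopologicalSpace K] [CompactSpace K] [T2Space K]

set_option linter.unusedSectionVars false

lemma my_exists_f (x : ℕ → K) (x₀ : K) (hinj : Function.Injective x) (hne : ∀ n, x n ≠ x₀)
    (hlim : Tendsto x atTop (𝓝 x₀)) :
    ∃ f : ℕ → C(K, ℝ), (∀ n, ∀ y : K, f n y ∈ Set.Icc (0:ℝ) 1) ∧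
      (Pairwise fun n m => Disjoint (tsupport ⇑(f n)) (tsupport ⇑(f m))) ∧
      (∀ n, f n (x n) = 1) := by
  classical
  -- the compact set of all points except x n
  set skip : ℕ → ℕ → ℕ := fun n m => if m < n then m else m + 1 with hskipdef
  set C : ℕ → Set K := fun n => insert x₀ (Set.range fun m => x (skip n m)) with hCdef
  have hCc : ∀ n, IsClosed (C n) := by
    intro n
    have hs : Tendsto (skip n) atTop atTop :=
      tendsto_atTop_mono (fun m => by dsimp [skip]; split <;> omega) tendsto_id
    exact (Filter.Tendsto.isCompact_insert_range (hlim.comp hs)).isClosed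
  have hmemC : ∀ n m, m ≠ n → x m ∈ C n := by
    intro n m hmn
    rcases lt_or_gt_of_ne hmn with h | h
    · exact Set.mem_insert_iff.2 (Or.inr ⟨m, by dsimp [skip]; rw [if_pos h]⟩)
    · refine Set.mem_insert_iff.2 (Or.inr ⟨m - 1, ?_⟩)
      dsimp [skip]
      rw [if_neg (by omega)]
      congr 1
      omega
  have hx0C : ∀ n, x₀ ∈ C n := fun n => Set.mem_insert _ _
  have hxnC : ∀ n, x n ∉ C n := by
    intro n hn
    rcases Set.mem_insert_iff.1 hn with h | ⟨m, hm⟩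
    · exact hne n h
    · have := hinj hm
      dsimp [skip] at this
      split at this <;> omega
  -- choose V n
  have hV : ∀ n, ∃ V : Set K, IsOpen V ∧ x n ∈ V ∧ closure V ⊆ (C n)ᶜ := by
    intro n
    obtain ⟨t, htn, htc, hts⟩ := exists_mem_nhds_isClosed_subset
      ((hCc n).isOpen_compl.mem_nhds (hxnC n))
    exact ⟨interior t, isOpen_interior, mem_interior_iff_mem_nhds.2 htn,
      (closure_minimal interior_subset htc).trans hts⟩
  choose V hVo hxV hVC using hV
  -- choose W n with closure inside V n
  have hW : ∀ n, ∃ W : Set K, IsOpen W ∧ x n ∈ W ∧ closure W ⊆ V n := by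
    intro n
    obtain ⟨t, htn, htc, hts⟩ := exists_mem_nhds_isClosed_subset
      ((hVo n).mem_nhds (hxV n))
    exact ⟨interior t, isOpen_interior, mem_interior_iff_mem_nhds.2 htn,
      (closure_minimal interior_subset htc).trans hts⟩
  choose W hWo hxW hWV using hW
  set U : ℕ → Set K := fun n => W n \ ⋃ k ∈ Finset.range n, closure (V k) with hUdef
  have hUc : ∀ n, IsClosed (⋃ k ∈ Finset.range n, closure (V k)) := fun n =>
    isClosed_biUnion_finset fun k _ => isClosed_closure
  have hUo : ∀ n, IsOpen (U n) := fun n => (hWo n).sdiff (hUc n)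
  have hxU : ∀ n, x n ∈ U n := by
    intro n
    refine ⟨hxW n, ?_⟩
    simp only [Set.mem_iUnion, not_exists, Finset.mem_range]
    intro k hk hmem
    exact (hVC k hmem) (hmemC k n (by omega))
  -- disjointness of closures
  have hdisj : ∀ m n, m < n → Disjoint (closure (U n)) (closure (U m)) := by
    intro m n hmn
    have hUnVm : U n ∩ V m = ∅ := by
      apply Set.eq_empty_iff_forall_notMem.2
      rintro y ⟨⟨-, hy2⟩, hy3⟩
      exact hy2 (Set.mem_biUnion (Finset.mem_range.2 hmn) (subset_closure hy3))
    have h1 : Disjoint (closure (U n)) (V m) := by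
      rw [Set.disjoint_right]
      intro y hyV hyc
      obtain ⟨z, hz1, hz2⟩ := mem_closure_iff.1 hyc (V m) (hVo m) hyV
      exact absurd (Set.mem_inter hz2 hz1) (by rw [hUnVm]; exact Set.notMem_empty z)
    exact h1.mono_right ((closure_mono Set.diff_subset).trans (hWV m))
  -- Urysohn
  have hf : ∀ n, ∃ f : C(K, ℝ), Set.EqOn f 0 (U n)ᶜ ∧ Set.EqOn f 1 {x n} ∧
      ∀ y, f y ∈ Set.Icc (0:ℝ) 1 := fun n =>
    exists_continuous_zero_one_of_isClosed (hUo n).isClosed_compl isClosed_singleton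
      (Set.disjoint_singleton_right.2 (by simpa using hxU n))
  choose f hf0 hf1 hficc using hf
  have hsupp : ∀ n, tsupport ⇑(f n) ⊆ closure (U n) := by
    intro n
    apply closure_minimal _ isClosed_closure
    intro y hy
    by_contra hyU
    exact hy ((hf0 n) (fun h => hyU (subset_closure h)))
  refine ⟨f, fun n y => hficc n y, ?_, fun n => hf1 n rfl⟩
  intro n m hnm
  rcases lt_or_gt_of_ne hnm with h | h
  · exact ((hdisj n m h).symm.mono (hsupp n) (hsupp m))
  · exact ((hdisj m n h).mono (hsupp n) (hsupp m))

end bumps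

section iso

variable {K : Type*} [TopologicalSpace K] [CompactSpace K] [T2Space K]

set_option linter.unusedSectionVars false

lemma my_iso (x : ℕ → K) (x₀ : K) (hlim : Tendsto x atTop (𝓝 x₀))
    (f : ℕ → C(K, ℝ))
    (hicc : ∀ n, ∀ y : K, f n y ∈ Set.Icc (0 : ℝ) 1)
    (hd : Pairwise fun n m => Disjoint (tsupport ⇑(f n)) (tsupport ⇑(f m)))
    (hone : ∀ n, f n (x n) = 1) :
    Nonempty (C₀(ℕ, ℝ) ≃ₗᵢ[ℝ] (Submodule.span ℝ (Set.range f)).topologicalClosure) := by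
  classical
  have hbd : ∀ n y, ‖f n y‖ ≤ 1 := fun n y => by
    rw [Real.norm_eq_abs, abs_le]
    exact ⟨by linarith [(hicc n y).1], (hicc n y).2⟩
  have hfx : ∀ n m, n ≠ m → f m (x n) = 0 := fun n m hnm =>
    my_disj_eval hd hnm (by rw [hone n]; norm_num)
  have ha0 : ∀ a : C₀(ℕ, ℝ), Tendsto (⇑a) atTop (𝓝 0) := by
    intro a
    have := a.zero_at_infty'
    rwa [cocompact_eq_cofinite, Nat.cofinite_eq_atTop] at this
  have hsum : ∀ a : C₀(ℕ, ℝ), Summable fun n => a n • f n :=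
    fun a => my_summable hbd hd (ha0 a)
  set T₀ : C₀(ℕ, ℝ) →ₗ[ℝ] C(K, ℝ) :=
    { toFun := fun a => ∑' n, a n • f n
      map_add' := by
        intro a b
        rw [← Summable.tsum_add (hsum a) (hsum b)]
        show (∑' n, (a + b) n • f n) = _
        refine tsum_congr fun n => ?_
        rw [← add_smul]
        congr 1
      map_smul' := by
        intro c a
        simp only [RingHom.id_apply]
        rw [← tsum_const_smul'' c]
        show (∑' n, (c • a) n • f n) = _
        refine tsum_congr fun n => ?_
        rw [smul_smul]
        congr 1 } with hT₀def
  have hTx : ∀ (a : C₀(ℕ, ℝ)) (m : ℕ), (T₀ a) (x m) = a m := by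
    intro a m
    show (∑' n, a n • f n) (x m) = a m
    rw [my_tsum_apply (hsum a) (x m)]
    rw [tsum_eq_single m (fun n hn => by rw [hfx m n (Ne.symm hn), mul_zero])]
    rw [hone m, mul_one]
  have hnorm : ∀ a : C₀(ℕ, ℝ), ‖T₀ a‖ = ‖a‖ := by
    intro a
    refine le_antisymm ?_ ?_
    · have hb : ∀ s : Finset ℕ, ‖∑ n ∈ s, a n • f n‖ ≤ ‖a‖ := by
        intro s
        refine my_sum_norm_le hbd hd _ s (norm_nonneg a) fun n _ => ?_
        have h := a.toBCF.norm_coe_le_norm n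
        rwa [ZeroAtInftyContinuousMap.norm_toBCF_eq_norm] at h
      exact le_of_tendsto' ((hsum a).hasSum : Tendsto _ _ _).norm hb
    · rw [← ZeroAtInftyContinuousMap.norm_toBCF_eq_norm]
      rw [BoundedContinuousFunction.norm_le (norm_nonneg _)]
      intro n
      have : a.toBCF n = (T₀ a) (x n) := (hTx a n).symm
      rw [this]
      exact (T₀ a).norm_coe_le_norm (x n)
  set Tli : C₀(ℕ, ℝ) →ₗᵢ[ℝ] C(K, ℝ) := ⟨T₀, hnorm⟩ with hTlidef
  -- the single functions in C₀
  have hsingle : ∀ m : ℕ, ∃ a : C₀(ℕ, ℝ), ⇑a = Pi.single m 1 := by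
    intro m
    refine ⟨⟨⟨Pi.single m 1, continuous_of_discreteTopology⟩, ?_⟩, rfl⟩
    rw [cocompact_eq_cofinite, Nat.cofinite_eq_atTop]
    have hev : (fun _ : ℕ => (0:ℝ)) =ᶠ[atTop] (Pi.single m (1:ℝ) : ℕ → ℝ) := by
      filter_upwards [eventually_ge_atTop (m + 1)] with n hn
      rw [Pi.single_apply, if_neg (Nat.ne_of_gt hn)]
    exact Tendsto.congr' hev tendsto_const_nhds
  have hrange : LinearMap.range Tli.toLinearMap
      = (Submodule.span ℝ (Set.range f)).topologicalClosure := by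
    refine le_antisymm ?_ ?_
    · rintro g ⟨a, rfl⟩
      have h1 : Tendsto (fun s : Finset ℕ => ∑ n ∈ s, a n • f n) atTop
          (𝓝 (∑' n, a n • f n)) := (hsum a).hasSum
      exact mem_closure_of_tendsto h1 (Eventually.of_forall fun s =>
        Submodule.sum_mem _ fun n _ =>
          Submodule.smul_mem _ _ (Submodule.subset_span ⟨n, rfl⟩))
    · have hcr : IsClosed ((LinearMap.range Tli.toLinearMap : Submodule ℝ C(K, ℝ)) :
          Set C(K, ℝ)) := by
        rw [LinearMap.coe_range]
        exact (Tli.isometry.isClosedEmbedding).isClosed_range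
      refine Submodule.topologicalClosure_minimal _ ?_ hcr
      rw [Submodule.span_le]
      rintro g ⟨m, rfl⟩
      obtain ⟨a, ha⟩ := hsingle m
      refine ⟨a, ?_⟩
      show (∑' n, a n • f n) = f m
      rw [tsum_eq_single m (fun n hn => by rw [ha, Pi.single_eq_of_ne hn, zero_smul])]
      rw [ha, Pi.single_eq_same, one_smul]
  exact ⟨Tli.equivRange.trans (LinearIsometryEquiv.ofEq _ _ hrange)⟩

end iso


theorem stmt6 {K : Type*} [TopologicalSpace K] [CompactSpace K] [T2Space K]
    (x : ℕ → K) (x₀ : K) (hinj : Function.Injective x) (hne : ∀ n, x n ≠ x₀)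
    (hlim : Tendsto x atTop (𝓝 x₀)) :
    (∃ E : Submodule ℝ C(K, ℝ), IsClosed (E : Set C(K, ℝ)) ∧
      Nonempty (C₀(ℕ, ℝ) ≃ₗᵢ[ℝ] E) ∧
      ∃ P : C(K, ℝ) →L[ℝ] C(K, ℝ), LinearMap.range (P : C(K, ℝ) →ₗ[ℝ] C(K, ℝ)) = E ∧ ∀ g ∈ E, P g = g) ∧
    (∀ f : ℕ → C(K, ℝ),
      (∀ n, ∀ y : K, f n y ∈ Set.Icc (0 : ℝ) 1) →
      (Pairwise fun n m => Disjoint (tsupport ⇑(f n)) (tsupport ⇑(f m))) →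
      (∀ n, f n (x n) = 1) →
      ∃ P : C(K, ℝ) →L[ℝ] C(K, ℝ),
        (∀ g : C(K, ℝ), P g = ∑' n, (g (x n) - g x₀) • f n) ∧
        LinearMap.range (P : C(K, ℝ) →ₗ[ℝ] C(K, ℝ)) = (Submodule.span ℝ (Set.range f)).topologicalClosure ∧
        ∀ g ∈ (Submodule.span ℝ (Set.range f)).topologicalClosure, P g = g) := by
  constructor
  · obtain ⟨f, hicc, hd, hone⟩ := my_exists_f x x₀ hinj hne hlim
    obtain ⟨P, hP, hrange, hfix⟩ := my_part2 x x₀ hlim f hicc hd hone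
    exact ⟨(Submodule.span ℝ (Set.range f)).topologicalClosure,
      Submodule.isClosed_topologicalClosure _,
      my_iso x x₀ hlim f hicc hd hone, P, hrange, hfix⟩
  · intro f hicc hd hone
    exact my_part2 x x₀ hlim f hicc hd hone
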